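/- arXiv:1711.03719 — 3 statements merged into one kernel-verified Lean document; each statement's English description precedes it below -/
import Mathlib

section
/- For α, ω, l > 0, the general solution of q̈ + l²ω²q = α/q³ with q > 0 is given explicitly by q(t) = sqrt(A + B cos(2lωt + φ)) where A = E/(l²ω²), B² = A² - α/(l²ω²), E is the energy, and consequently every solution is periodic with period π/(lω). -/
/-- Every positive solution of q̈ + l²ω²q = α/q³ has the explicit form
q(t) = sqrt(A + B cos(2lωt + φ)) with A = E/(l²ω²) and B² = A² - α/(l²ω²),
and is consequently periodic with period π/(lω). -/
theorem stmt_5 (α ω l : ℝ) (hα : 0 < α) (hω : 0 < ω) (hl : 0 < l)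
    (q : ℝ → ℝ) (hq : ContDiff ℝ 2 q) (hpos : ∀ t, 0 < q t)
    (hode : ∀ t, deriv (deriv q) t + l ^ 2 * ω ^ 2 * q t = α / (q t) ^ 3)
    (E : ℝ)
    (hE : ∀ t, (1 / 2) * (deriv q t) ^ 2 + l ^ 2 * ω ^ 2 / 2 * (q t) ^ 2
        + α / (2 * (q t) ^ 2) = E) :
    (∃ B φ : ℝ, B ^ 2 = (E / (l ^ 2 * ω ^ 2)) ^ 2 - α / (l ^ 2 * ω ^ 2) ∧
      ∀ t, q t = Real.sqrt (E / (l ^ 2 * ω ^ 2) + B * Real.cos (2 * l * ω * t + φ))) ∧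
    (∀ t, q (t + Real.pi / (l * ω)) = q t) := by
  have hlo : (0:ℝ) < l ^ 2 * ω ^ 2 := by positivity
  set A : ℝ := E / (l ^ 2 * ω ^ 2) with hA
  have hAE : l ^ 2 * ω ^ 2 * A = E := by rw [hA]; field_simp [hlo.ne']
  have hqd : Differentiable ℝ q := hq.differentiable (by norm_num)
  have hq1 : ContDiff ℝ 1 (deriv q) :=
    ((contDiff_succ_iff_deriv (n := 1)).mp (by exact_mod_cast hq)).2.2
  have hq'd : Differentiable ℝ (deriv q) := hq1.differentiable (by norm_num)
  have hq'' : ∀ t, deriv (deriv q) t = α / (q t) ^ 3 - l ^ 2 * ω ^ 2 * q t :=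
    fun t => by linarith [hode t]
  have hq'sq : ∀ t, (deriv q t) ^ 2 = 2 * E - l ^ 2 * ω ^ 2 * (q t) ^ 2 - α / (q t) ^ 2 := by
    intro t
    have h := hE t
    have hqne : q t ≠ 0 := (hpos t).ne'
    field_simp at h ⊢
    nlinarith [h]
  set k : ℝ := 2 * l * ω with hk
  have hkpos : 0 < k := by positivity
  have hkne : k ≠ 0 := hkpos.ne'
  have hu1 : ∀ t, HasDerivAt (fun s => (q s) ^ 2) (2 * q t * deriv q t) t := by
    intro t
    have := ((hqd t).hasDerivAt).fun_pow 2
    simpa [mul_comm, mul_assoc] using this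
  have hu2 : ∀ t, HasDerivAt (fun s => 2 * q s * deriv q s)
      (-(k ^ 2) * ((q t) ^ 2 - A)) t := by
    intro t
    have h1 : HasDerivAt (fun s => (2 * q s) * deriv q s)
        (2 * deriv q t * deriv q t + 2 * q t * deriv (deriv q) t) t :=
      (((hqd t).hasDerivAt).const_mul 2).mul ((hq'd t).hasDerivAt)
    convert h1 using 1
    rw [hq'' t]
    have h2 := hq'sq t
    have hqne : q t ≠ 0 := (hpos t).ne'
    have h3 : α / (q t) ^ 2 = 2 * E - l ^ 2 * ω ^ 2 * (q t) ^ 2 - (deriv q t) ^ 2 := by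
      linarith
    have h4 : q t * (α / (q t) ^ 3) = α / (q t) ^ 2 := by
      field_simp
    have hkk : k ^ 2 = 4 * (l ^ 2 * ω ^ 2) := by rw [hk]; ring
    calc -(k ^ 2) * ((q t) ^ 2 - A)
        = -(4 * (l ^ 2 * ω ^ 2)) * (q t) ^ 2 + 4 * (l ^ 2 * ω ^ 2 * A) := by
          rw [hkk]; ring
      _ = -(4 * (l ^ 2 * ω ^ 2)) * (q t) ^ 2 + 4 * E := by rw [hAE]
      _ = 2 * deriv q t * deriv q t + 2 * (α / (q t) ^ 2)
            - 2 * (l ^ 2 * ω ^ 2 * (q t) ^ 2) := by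
          rw [h3]; ring
      _ = 2 * deriv q t * deriv q t + 2 * (q t * (α / (q t) ^ 3))
            - 2 * (l ^ 2 * ω ^ 2 * (q t) ^ 2) := by rw [h4]
      _ = 2 * deriv q t * deriv q t + 2 * q t * (α / (q t) ^ 3 - l ^ 2 * ω ^ 2 * q t) := by
          ring
  set v : ℝ → ℝ := fun t => (q t) ^ 2 - A with hv
  set w : ℝ → ℝ := fun t => 2 * q t * deriv q t with hw
  have hvd : ∀ t, HasDerivAt v (w t) t := fun t => (hu1 t).sub_const A
  have hwd : ∀ t, HasDerivAt w (-(k ^ 2) * v t) t := fun t => hu2 t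
  set F : ℝ → ℝ := fun t => v t * Real.cos (k * t) - (w t / k) * Real.sin (k * t) with hF
  set G : ℝ → ℝ := fun t => v t * Real.sin (k * t) + (w t / k) * Real.cos (k * t) with hG
  have hcs : ∀ t : ℝ, HasDerivAt (fun s : ℝ => Real.cos (k * s))
      (-Real.sin (k * t) * k) t := by
    intro t
    have hid : HasDerivAt (fun s : ℝ => k * s) k t := by
      simpa using (hasDerivAt_id t).const_mul k
    simpa using hid.cos
  have hsn : ∀ t : ℝ, HasDerivAt (fun s : ℝ => Real.sin (k * s))
      (Real.cos (k * t) * k) t := by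
    intro t
    have hid : HasDerivAt (fun s : ℝ => k * s) k t := by
      simpa using (hasDerivAt_id t).const_mul k
    simpa using hid.sin
  have hFd : ∀ t, HasDerivAt F 0 t := by
    intro t
    have h := ((hvd t).fun_mul (hcs t)).fun_sub (((hwd t).div_const k).fun_mul (hsn t))
    convert h using 1
    · rfl
    · rfl
    field_simp
    ring
  have hGd : ∀ t, HasDerivAt G 0 t := by
    intro t
    have h := ((hvd t).fun_mul (hsn t)).fun_add (((hwd t).div_const k).fun_mul (hcs t))
    convert h using 1
    · rfl
    · rfl
    field_simp
    ring
  have hFc : ∀ t, F t = F 0 :=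
    fun t => is_const_of_deriv_eq_zero (fun x => (hFd x).differentiableAt)
      (fun x => (hFd x).deriv) t 0
  have hGc : ∀ t, G t = G 0 :=
    fun t => is_const_of_deriv_eq_zero (fun x => (hGd x).differentiableAt)
      (fun x => (hGd x).deriv) t 0
  set C : ℝ := v 0 with hC
  set D : ℝ := w 0 / k with hD
  have hF0 : F 0 = C := by simp [hF, hC, hD]
  have hG0 : G 0 = D := by simp [hG, hC, hD]
  have hvt : ∀ t, v t = C * Real.cos (k * t) + D * Real.sin (k * t) := by
    intro t
    have h1 := hFc t
    have h2 := hGc t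
    rw [hF0] at h1; rw [hG0] at h2
    have hcs2 : Real.cos (k * t) ^ 2 + Real.sin (k * t) ^ 2 = 1 := by
      rw [add_comm]; exact Real.sin_sq_add_cos_sq (k * t)
    have e1 : F t * Real.cos (k * t) + G t * Real.sin (k * t)
        = v t * (Real.cos (k * t) ^ 2 + Real.sin (k * t) ^ 2) := by
      simp only [hF, hG]; ring
    rw [hcs2, mul_one, h1, h2] at e1
    linarith [e1]
  clear hFc hGc hFd hGd hF0 hG0 hF hG F G hsn hcs hwd hvd hu2 hu1
  -- value of C^2 + D^2
  have hC2 : C = (q 0) ^ 2 - A := rfl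
  have hD2 : k ^ 2 * D ^ 2 = (2 * q 0 * deriv q 0) ^ 2 := by
    rw [hD]; field_simp; simp only [hw]; ring
  have hqne0 : q 0 ≠ 0 := (hpos 0).ne'
  have h0' : (q 0) ^ 2 * (deriv q 0) ^ 2
      = 2 * E * (q 0) ^ 2 - l ^ 2 * ω ^ 2 * (q 0) ^ 4 - α := by
    have hα2 : (q 0) ^ 2 * (α / (q 0) ^ 2) = α := by field_simp
    calc (q 0) ^ 2 * (deriv q 0) ^ 2
        = (q 0) ^ 2 * (2 * E - l ^ 2 * ω ^ 2 * (q 0) ^ 2 - α / (q 0) ^ 2) := by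
          rw [hq'sq 0]
      _ = 2 * E * (q 0) ^ 2 - l ^ 2 * ω ^ 2 * (q 0) ^ 4 - (q 0) ^ 2 * (α / (q 0) ^ 2) := by
          ring
      _ = 2 * E * (q 0) ^ 2 - l ^ 2 * ω ^ 2 * (q 0) ^ 4 - α := by rw [hα2]
  have hkk : k ^ 2 = 4 * (l ^ 2 * ω ^ 2) := by rw [hk]; ring
  clear_value A k C D
  have key : k ^ 2 * (C ^ 2 + D ^ 2) = 4 * (l ^ 2 * ω ^ 2) * A ^ 2 - 4 * α := by
    rw [hC2]
    linear_combination hD2 + 4 * h0' - 8 * (q 0) ^ 2 * hAE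
      + ((q 0) ^ 2 - A) ^ 2 * hkk
  have hcd : (l ^ 2 * ω ^ 2) * (C ^ 2 + D ^ 2) = (l ^ 2 * ω ^ 2) * A ^ 2 - α := by
    linear_combination key / 4 - ((C ^ 2 + D ^ 2) / 4) * hkk
  have hCD : C ^ 2 + D ^ 2 = A ^ 2 - α / (l ^ 2 * ω ^ 2) := by
    have hr : A ^ 2 - α / (l ^ 2 * ω ^ 2)
        = ((l ^ 2 * ω ^ 2) * A ^ 2 - α) / (l ^ 2 * ω ^ 2) := by
      field_simp
    rw [hr, ← hcd, mul_div_cancel_left₀ _ hlo.ne']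
  set B : ℝ := Real.sqrt (C ^ 2 + D ^ 2) with hB
  have hB2 : B ^ 2 = C ^ 2 + D ^ 2 := Real.sq_sqrt (by positivity)
  obtain ⟨φ, hφc, hφs⟩ : ∃ φ, B * Real.cos φ = C ∧ B * Real.sin φ = -D := by
    rcases eq_or_ne B 0 with hB0 | hB0
    · have h0 : C ^ 2 + D ^ 2 = 0 := by rw [← hB2, hB0]; norm_num
      have hC0 : C = 0 := by
        have h1 : C ^ 2 ≤ 0 := by linarith only [sq_nonneg D, h0]
        exact sq_eq_zero_iff.mp (le_antisymm h1 (sq_nonneg C))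
      have hD0 : D = 0 := by
        have h1 : D ^ 2 ≤ 0 := by linarith only [sq_nonneg C, h0]
        exact sq_eq_zero_iff.mp (le_antisymm h1 (sq_nonneg D))
      exact ⟨0, by simp [hB0, hC0], by simp [hB0, hD0]⟩
    · set z : ℂ := C - D * Complex.I with hz
      have hre : z.re = C := by simp [hz]
      have him : z.im = -D := by simp [hz]
      have habs : ‖z‖ = B := by
        rw [Complex.norm_def, Complex.normSq_apply, hre, him, hB]
        congr 1; ring
      have hzne : z ≠ 0 := fun h => hB0 (by rw [← habs, h, norm_zero])
      refine ⟨z.arg, ?_, ?_⟩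
      · rw [Complex.cos_arg hzne, habs, hre]; field_simp
      · rw [Complex.sin_arg, habs, him]; field_simp
  have hform : ∀ t, q t = Real.sqrt (A + B * Real.cos (k * t + φ)) := by
    intro t
    have heq : A + B * Real.cos (k * t + φ) = (q t) ^ 2 := by
      rw [Real.cos_add]
      have hvt' : (q t) ^ 2 - A = C * Real.cos (k * t) + D * Real.sin (k * t) := hvt t
      linear_combination Real.cos (k * t) * hφc - Real.sin (k * t) * hφs - hvt'
    rw [heq, Real.sqrt_sq (hpos t).le]
  constructor
  · exact ⟨B, φ, by rw [hB2, hCD], hform⟩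
  · intro t
    rw [hform t, hform (t + Real.pi / (l * ω))]
    have hper : k * (t + Real.pi / (l * ω)) + φ
        = (k * t + φ) + 2 * Real.pi := by
      rw [hk]
      field_simp
      ring
    rw [hper, Real.cos_add_two_pi]
end

section
/- For k > 0, ω > 0 and A, B > 0, the points (q₁, q₂) = (±A(k/ω)^{k/2}(A²+B²)^{(k-1)/2}, ±B(k/ω)^{k/2}(A²+B²)^{(k-1)/2}) are critical points of the TTW effective potential V(q₁,q₂) = (ω²/2)(q₁²+q₂²)^{1/k} + (k²/2)(q₁²+q₂²)^{(k-1)/k}(A⁴/q₁² + B⁴/q₂²). -/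
lemma ttw_helper1 (c₁ c₂ e₁ e₂ α β b x : ℝ) (hb : b ≠ 0) (hx : x ≠ 0) :
    HasDerivAt (fun q : ℝ => c₁ * (q ^ 2 + b ^ 2) ^ e₁
        + c₂ * (q ^ 2 + b ^ 2) ^ e₂ * (α / q ^ 2 + β / b ^ 2))
      (c₁ * (2 * x * e₁ * (x ^ 2 + b ^ 2) ^ (e₁ - 1))
        + (c₂ * (2 * x * e₂ * (x ^ 2 + b ^ 2) ^ (e₂ - 1)) * (α / x ^ 2 + β / b ^ 2)
          + c₂ * (x ^ 2 + b ^ 2) ^ e₂ * (-(α * (2 * x)) / (x ^ 2) ^ 2))) x := by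
  have hr : x ^ 2 + b ^ 2 ≠ 0 := by positivity
  have hq : HasDerivAt (fun q : ℝ => q ^ 2 + b ^ 2) (2 * x) x := by
    simpa using ((hasDerivAt_pow 2 x).add_const (b ^ 2))
  have h1 : HasDerivAt (fun q : ℝ => (q ^ 2 + b ^ 2) ^ e₁)
      (2 * x * e₁ * (x ^ 2 + b ^ 2) ^ (e₁ - 1)) x := hq.rpow_const (Or.inl hr)
  have h2 : HasDerivAt (fun q : ℝ => (q ^ 2 + b ^ 2) ^ e₂)
      (2 * x * e₂ * (x ^ 2 + b ^ 2) ^ (e₂ - 1)) x := hq.rpow_const (Or.inl hr)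
  have h3 : HasDerivAt (fun q : ℝ => α / q ^ 2 + β / b ^ 2)
      (-(α * (2 * x)) / (x ^ 2) ^ 2) x := by
    have := ((hasDerivAt_const x α).div (hasDerivAt_pow 2 x) (pow_ne_zero 2 hx)).add_const
      (β / b ^ 2)
    simpa using this
  exact (h1.const_mul c₁).add (((h2.const_mul c₂).mul h3))

lemma ttw_helper2 (c₁ c₂ e₁ e₂ α β b x : ℝ) (hb : b ≠ 0) (hx : x ≠ 0) :
    HasDerivAt (fun q : ℝ => c₁ * (b ^ 2 + q ^ 2) ^ e₁
        + c₂ * (b ^ 2 + q ^ 2) ^ e₂ * (α / b ^ 2 + β / q ^ 2))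
      (c₁ * (2 * x * e₁ * (b ^ 2 + x ^ 2) ^ (e₁ - 1))
        + (c₂ * (2 * x * e₂ * (b ^ 2 + x ^ 2) ^ (e₂ - 1)) * (α / b ^ 2 + β / x ^ 2)
          + c₂ * (b ^ 2 + x ^ 2) ^ e₂ * (-(β * (2 * x)) / (x ^ 2) ^ 2))) x := by
  have hr : b ^ 2 + x ^ 2 ≠ 0 := by positivity
  have hq : HasDerivAt (fun q : ℝ => b ^ 2 + q ^ 2) (2 * x) x := by
    simpa using ((hasDerivAt_pow 2 x).const_add (b ^ 2))
  have h1 : HasDerivAt (fun q : ℝ => (b ^ 2 + q ^ 2) ^ e₁)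
      (2 * x * e₁ * (b ^ 2 + x ^ 2) ^ (e₁ - 1)) x := hq.rpow_const (Or.inl hr)
  have h2 : HasDerivAt (fun q : ℝ => (b ^ 2 + q ^ 2) ^ e₂)
      (2 * x * e₂ * (b ^ 2 + x ^ 2) ^ (e₂ - 1)) x := hq.rpow_const (Or.inl hr)
  have h3 : HasDerivAt (fun q : ℝ => α / b ^ 2 + β / q ^ 2)
      (-(β * (2 * x)) / (x ^ 2) ^ 2) x := by
    have := (((hasDerivAt_const x β).div (hasDerivAt_pow 2 x)
      (pow_ne_zero 2 hx)).const_add (α / b ^ 2))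
    simpa using this
  exact (h1.const_mul c₁).add (((h2.const_mul c₂).mul h3))

/-- The four points (±A(k/ω)^{k/2}(A²+B²)^{(k-1)/2}, ±B(k/ω)^{k/2}(A²+B²)^{(k-1)/2})
are critical points of the TTW effective potential. -/
theorem stmt_8 (k ω A B : ℝ) (hk : 0 < k) (hω : 0 < ω) (hA : 0 < A) (hB : 0 < B)
    (σ₁ σ₂ : ℝ) (hσ₁ : σ₁ = 1 ∨ σ₁ = -1) (hσ₂ : σ₂ = 1 ∨ σ₂ = -1) :
    let V : ℝ → ℝ → ℝ := fun q₁ q₂ =>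
      ω ^ 2 / 2 * (q₁ ^ 2 + q₂ ^ 2) ^ ((1 : ℝ) / k)
      + k ^ 2 / 2 * (q₁ ^ 2 + q₂ ^ 2) ^ ((k - 1) / k) * (A ^ 4 / q₁ ^ 2 + B ^ 4 / q₂ ^ 2)
    let c : ℝ := (k / ω) ^ (k / 2) * (A ^ 2 + B ^ 2) ^ ((k - 1) / 2)
    deriv (fun q₁ => V q₁ (σ₂ * B * c)) (σ₁ * A * c) = 0 ∧
    deriv (fun q₂ => V (σ₁ * A * c) q₂) (σ₂ * B * c) = 0 := by
  intro V c
  set t : ℝ := k / ω with ht_def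
  set S : ℝ := A ^ 2 + B ^ 2 with hS_def
  have ht : 0 < t := div_pos hk hω
  have hS : 0 < S := by positivity
  have hc : 0 < c := by positivity
  have hσ₁sq : σ₁ ^ 2 = 1 := by rcases hσ₁ with h | h <;> rw [h] <;> norm_num
  have hσ₂sq : σ₂ ^ 2 = 1 := by rcases hσ₂ with h | h <;> rw [h] <;> norm_num
  have hσ₁0 : σ₁ ≠ 0 := by rcases hσ₁ with h | h <;> rw [h] <;> norm_num
  have hσ₂0 : σ₂ ≠ 0 := by rcases hσ₂ with h | h <;> rw [h] <;> norm_num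
  have hx : σ₁ * A * c ≠ 0 := by positivity
  have hb : σ₂ * B * c ≠ 0 := by positivity
  -- rpow arithmetic
  have hc2 : c ^ 2 = t ^ k * S ^ (k - 1) := by
    show (t ^ (k/2) * S ^ ((k-1)/2)) ^ 2 = _
    rw [mul_pow, ← Real.rpow_natCast (t ^ (k/2)) 2, ← Real.rpow_natCast (S ^ ((k-1)/2)) 2,
      ← Real.rpow_mul ht.le, ← Real.rpow_mul hS.le]
    norm_num
  have hSk : S ^ (k - 1) * S = S ^ k := by
    rw [← Real.rpow_add_one hS.ne' (k - 1)]; ring_nf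
  have hr2 : S * c ^ 2 = (t * S) ^ k := by
    rw [hc2, Real.mul_rpow ht.le hS.le, ← hSk]; ring
  have htS : 0 < t * S := by positivity
  have hr2pos : 0 < (t * S) ^ k := Real.rpow_pos_of_pos htS k
  have hP : ((t * S) ^ k) ^ ((1:ℝ) / k) = t * S := by
    rw [← Real.rpow_mul htS.le, mul_one_div, div_self hk.ne', Real.rpow_one]
  have hQ : ((t * S) ^ k) ^ ((k - 1) / k) = (t * S) ^ k / (t * S) := by
    rw [← Real.rpow_mul htS.le, mul_div_cancel₀ _ hk.ne', Real.rpow_sub htS, Real.rpow_one]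
  have hP' : ((t * S) ^ k) ^ ((1:ℝ) / k - 1) = (t * S) / (t * S) ^ k := by
    rw [Real.rpow_sub hr2pos, Real.rpow_one, hP]
  have hQ' : ((t * S) ^ k) ^ ((k - 1) / k - 1) = ((t * S) ^ k / (t * S)) / (t * S) ^ k := by
    rw [Real.rpow_sub hr2pos, Real.rpow_one, hQ]
  have hx2 : (σ₁ * A * c) ^ 2 = A ^ 2 * c ^ 2 := by
    rw [mul_pow, mul_pow, hσ₁sq]; ring
  have hb2 : (σ₂ * B * c) ^ 2 = B ^ 2 * c ^ 2 := by
    rw [mul_pow, mul_pow, hσ₂sq]; ring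
  have hsum : (σ₁ * A * c) ^ 2 + (σ₂ * B * c) ^ 2 = (t * S) ^ k := by
    rw [hx2, hb2, ← hr2, hS_def]; ring
  -- the common algebraic fact: ω² (tS) c² = k² ((tS)^k/(tS)) S  times stuff; we do it inline
  constructor
  · rw [(ttw_helper1 (ω ^ 2 / 2) (k ^ 2 / 2) ((1:ℝ)/k) ((k-1)/k) (A ^ 4) (B ^ 4)
      (σ₂ * B * c) (σ₁ * A * c) hb hx).deriv]
    rw [hsum, hP', hQ', hQ, hx2, hb2, ← hr2]
    have hcn := hc.ne'
    have hAn := hA.ne'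
    have hBn := hB.ne'
    have hSn := hS.ne'
    rw [ht_def]
    field_simp
    ring
  · rw [(ttw_helper2 (ω ^ 2 / 2) (k ^ 2 / 2) ((1:ℝ)/k) ((k-1)/k) (A ^ 4) (B ^ 4)
      (σ₁ * A * c) (σ₂ * B * c) hx hb).deriv]
    rw [show (σ₁ * A * c) ^ 2 + (σ₂ * B * c) ^ 2 = (t*S)^k from hsum, hP', hQ', hQ, hx2, hb2,
      ← hr2]
    have hcn := hc.ne'
    have hAn := hA.ne'
    have hBn := hB.ne'
    have hSn := hS.ne'
    rw [ht_def]
    field_simp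
    ring
end

section
/- At the critical point (q₁*, q₂*) = (η/(24c), -a/(6c)) of the Drach potential with c > 0 and η = sqrt(72bc - 6a²) > 0, the Hessian of V is diagonal with entries (128/3)(3/η)^{2/3} c^{5/3} and 24(3/η)^{2/3} c^{5/3}; in particular it is positive definite, and the ratio of the two frequencies sqrt(H₁₁/H₂₂) equals 4/3. -/
private lemma drach_poly (a b c q₂ : ℝ) (x : ℝ) :
    HasDerivAt (fun q₁ : ℝ => a * q₂ + b + c * (4 * q₁ ^ 2 + 3 * q₂ ^ 2)) (c * (8 * x)) x := by
  have h := ((((hasDerivAt_pow 2 x).const_mul (4 : ℝ)).add_const (3 * q₂ ^ 2)).const_mul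
      c).const_add (a * q₂ + b)
  exact h.congr_deriv (by ring)

private lemma drach_d1 (a b c q₂ : ℝ) {x : ℝ} (hx : x ≠ 0) :
    HasDerivAt (fun q₁ : ℝ => (a * q₂ + b + c * (4 * q₁ ^ 2 + 3 * q₂ ^ 2)) * q₁ ^ (-(2 : ℝ) / 3))
      (c * (8 * x) * x ^ (-(2 : ℝ) / 3)
        + (a * q₂ + b + c * (4 * x ^ 2 + 3 * q₂ ^ 2))
          * ((-(2 : ℝ) / 3) * x ^ ((-(2 : ℝ) / 3) - 1))) x :=
  (drach_poly a b c q₂ x).mul (Real.hasDerivAt_rpow_const (Or.inl hx))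

/-- At the critical point of the Drach potential the Hessian is diagonal with entries
(128/3)(3/η)^{2/3}c^{5/3} and 24(3/η)^{2/3}c^{5/3}; it is positive definite, and the
frequency ratio sqrt(H₁₁/H₂₂) equals 4/3. -/
theorem stmt_11 (a b c : ℝ) (hc : 0 < c) (hb : a ^ 2 / (12 * c) < b) :
    let η : ℝ := Real.sqrt (72 * b * c - 6 * a ^ 2)
    let V : ℝ → ℝ → ℝ := fun q₁ q₂ =>
      (a * q₂ + b + c * (4 * q₁ ^ 2 + 3 * q₂ ^ 2)) * q₁ ^ (-(2 : ℝ) / 3)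
    let q₁s : ℝ := η / (24 * c)
    let q₂s : ℝ := -a / (6 * c)
    let H₁₁ : ℝ := 128 / 3 * (3 / η) ^ ((2 : ℝ) / 3) * c ^ ((5 : ℝ) / 3)
    let H₂₂ : ℝ := 24 * (3 / η) ^ ((2 : ℝ) / 3) * c ^ ((5 : ℝ) / 3)
    deriv (deriv (fun q₁ => V q₁ q₂s)) q₁s = H₁₁ ∧
    deriv (deriv (fun q₂ => V q₁s q₂)) q₂s = H₂₂ ∧
    deriv (fun q₂ => deriv (fun q₁ => V q₁ q₂) q₁s) q₂s = 0 ∧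
    (Matrix.diagonal ![H₁₁, H₂₂]).PosDef ∧
    Real.sqrt (H₁₁ / H₂₂) = 4 / 3 := by
  intro η V q₁s q₂s H₁₁ H₂₂
  have h6 : 0 < 72 * b * c - 6 * a ^ 2 := by
    have := (div_lt_iff₀ (by positivity)).mp hb
    nlinarith
  have hη : 0 < η := Real.sqrt_pos.mpr h6
  have hη2 : η ^ 2 = 72 * b * c - 6 * a ^ 2 := Real.sq_sqrt h6.le
  have hb' : b = (η ^ 2 + 6 * a ^ 2) / (72 * c) := by
    field_simp
    linarith [hη2]
  have hx0 : 0 < q₁s := div_pos hη (by positivity)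
  set s : ℝ := q₁s ^ (-(2 : ℝ) / 3) with hs_def
  have hKpos : 0 < (3 / η) ^ ((2 : ℝ) / 3) := Real.rpow_pos_of_pos (by positivity) _
  have hc53 : c ^ ((5 : ℝ) / 3) = c * c ^ ((2 : ℝ) / 3) := by
    rw [show (5 : ℝ) / 3 = 1 + (2 : ℝ) / 3 by norm_num, Real.rpow_add hc, Real.rpow_one]
  have h8 : (8 : ℝ) ^ ((2 : ℝ) / 3) = 4 := by
    rw [show (8 : ℝ) = 2 ^ (3 : ℕ) by norm_num, ← Real.rpow_natCast (2 : ℝ) 3,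
      ← Real.rpow_mul (by norm_num)]
    norm_num
  have hinv : q₁s⁻¹ = 8 * ((3 / η) * c) := by
    show (η / (24 * c))⁻¹ = _
    field_simp
    ring
  have hs : s = 4 * (3 / η) ^ ((2 : ℝ) / 3) * c ^ ((2 : ℝ) / 3) := by
    rw [hs_def, show (-(2 : ℝ) / 3) = -((2 : ℝ) / 3) by ring, Real.rpow_neg hx0.le,
      ← Real.inv_rpow hx0.le, hinv, Real.mul_rpow (by norm_num) (by positivity),
      Real.mul_rpow (by positivity) hc.le, h8]
    ring
  have hspos : 0 < s := by
    rw [hs]; positivity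
  -- second derivative in q₂
  have key2 : deriv (fun q₂ => V q₁s q₂) = fun q₂ => (a + c * (6 * q₂)) * s := by
    funext y
    have h : HasDerivAt (fun q₂ : ℝ =>
        (a * q₂ + b + c * (4 * q₁s ^ 2 + 3 * q₂ ^ 2)) * s) ((a + c * (6 * y)) * s) y := by
      have h1 := (((hasDerivAt_id' (𝕜 := ℝ) y).const_mul a).add_const b).add
        ((((hasDerivAt_pow 2 y).const_mul (3 : ℝ)).const_add (4 * q₁s ^ 2)).const_mul c)
      have := h1.mul_const s
      exact this.congr_deriv (by ring)
    exact h.deriv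
  have part2 : deriv (deriv (fun q₂ => V q₁s q₂)) q₂s = H₂₂ := by
    rw [key2]
    have h : HasDerivAt (fun q₂ : ℝ => (a + c * (6 * q₂)) * s) (c * 6 * s) q₂s := by
      have := ((((hasDerivAt_id' (𝕜 := ℝ) q₂s).const_mul (6 : ℝ)).const_mul c).const_add
        a).mul_const s
      exact this.congr_deriv (by ring)
    rw [h.deriv, show H₂₂ = 24 * (3 / η) ^ ((2 : ℝ) / 3) * c ^ ((5 : ℝ) / 3) from rfl,
      hc53, hs]
    ring
  -- mixed derivative
  have part3 : deriv (fun q₂ => deriv (fun q₁ => V q₁ q₂) q₁s) q₂s = 0 := by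
    have keym : (fun q₂ => deriv (fun q₁ => V q₁ q₂) q₁s) = fun q₂ =>
        c * (8 * q₁s) * s + (a * q₂ + b + c * (4 * q₁s ^ 2 + 3 * q₂ ^ 2))
          * ((-(2 : ℝ) / 3) * q₁s ^ ((-(2 : ℝ) / 3) - 1)) := by
      funext y
      exact (drach_d1 a b c y hx0.ne').deriv
    rw [keym]
    have h : HasDerivAt (fun q₂ : ℝ =>
        c * (8 * q₁s) * s + (a * q₂ + b + c * (4 * q₁s ^ 2 + 3 * q₂ ^ 2))
          * ((-(2 : ℝ) / 3) * q₁s ^ ((-(2 : ℝ) / 3) - 1)))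
        ((a + c * (6 * q₂s)) * ((-(2 : ℝ) / 3) * q₁s ^ ((-(2 : ℝ) / 3) - 1))) q₂s := by
      have h1 := ((((hasDerivAt_id' (𝕜 := ℝ) q₂s).const_mul a).add_const b).add
        ((((hasDerivAt_pow 2 q₂s).const_mul (3 : ℝ)).const_add (4 * q₁s ^ 2)).const_mul
          c)).mul_const ((-(2 : ℝ) / 3) * q₁s ^ ((-(2 : ℝ) / 3) - 1))
      have h2 := h1.const_add (c * (8 * q₁s) * s)
      exact h2.congr_deriv (by ring)
    rw [h.deriv]
    have : a + c * (6 * q₂s) = 0 := by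
      show a + c * (6 * (-a / (6 * c))) = 0
      field_simp
      ring
    rw [this, zero_mul]
  -- second derivative in q₁
  have part1 : deriv (deriv (fun q₁ => V q₁ q₂s)) q₁s = H₁₁ := by
    have hEE : deriv (fun q₁ => V q₁ q₂s) =ᶠ[nhds q₁s] fun x =>
        c * (8 * x) * x ^ (-(2 : ℝ) / 3)
          + (a * q₂s + b + c * (4 * x ^ 2 + 3 * q₂s ^ 2))
            * ((-(2 : ℝ) / 3) * x ^ ((-(2 : ℝ) / 3) - 1)) := by
      filter_upwards [eventually_gt_nhds hx0] with y hy
      exact (drach_d1 a b c q₂s hy.ne').deriv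
    rw [hEE.deriv_eq]
    set p : ℝ := -(2 : ℝ) / 3 with hp_def
    have hlin : HasDerivAt (fun x : ℝ => c * (8 * x)) (c * 8) q₁s := by
      have := ((hasDerivAt_id' (𝕜 := ℝ) q₁s).const_mul (8 : ℝ)).const_mul c
      exact this.congr_deriv (by ring)
    have hrp : HasDerivAt (fun x : ℝ => x ^ p) (p * q₁s ^ (p - 1)) q₁s :=
      Real.hasDerivAt_rpow_const (Or.inl hx0.ne')
    have hrp2 : HasDerivAt (fun x : ℝ => p * x ^ (p - 1))
        (p * ((p - 1) * q₁s ^ (p - 1 - 1))) q₁s :=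
      (Real.hasDerivAt_rpow_const (Or.inl hx0.ne')).const_mul p
    have hg : HasDerivAt (fun x : ℝ =>
        c * (8 * x) * x ^ p
          + (a * q₂s + b + c * (4 * x ^ 2 + 3 * q₂s ^ 2)) * (p * x ^ (p - 1)))
        (c * 8 * q₁s ^ p + c * (8 * q₁s) * (p * q₁s ^ (p - 1))
          + (c * (8 * q₁s) * (p * q₁s ^ (p - 1))
            + (a * q₂s + b + c * (4 * q₁s ^ 2 + 3 * q₂s ^ 2))
              * (p * ((p - 1) * q₁s ^ (p - 1 - 1))))) q₁s :=
      (hlin.mul hrp).add ((drach_poly a b c q₂s q₁s).mul hrp2)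
    rw [hg.deriv]
    have hp1 : q₁s ^ (p - 1) = s / q₁s := by
      rw [Real.rpow_sub hx0, Real.rpow_one, hs_def]
    have hp2 : q₁s ^ (p - 1 - 1) = s / q₁s / q₁s := by
      rw [Real.rpow_sub hx0, hp1, Real.rpow_one]
    rw [hp1, hp2, hp_def, ← hs_def]
    have hq1 : q₁s = η / (24 * c) := rfl
    have hq2 : q₂s = -a / (6 * c) := rfl
    show _ = 128 / 3 * (3 / η) ^ ((2 : ℝ) / 3) * c ^ ((5 : ℝ) / 3)
    rw [hc53, hq1, hq2, hb', hs]
    field_simp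
    ring
  refine ⟨part1, part2, part3, ?_, ?_⟩
  · refine Matrix.PosDef.diagonal ?_
    intro i
    fin_cases i
    · simpa using mul_pos (mul_pos (by norm_num : (0:ℝ) < 128 / 3) hKpos)
        (Real.rpow_pos_of_pos hc _)
    · simpa using mul_pos (mul_pos (by norm_num : (0:ℝ) < 24) hKpos)
        (Real.rpow_pos_of_pos hc _)
  · have hH22 : H₂₂ ≠ 0 := by
      show 24 * (3 / η) ^ ((2 : ℝ) / 3) * c ^ ((5 : ℝ) / 3) ≠ 0
      positivity
    have : H₁₁ / H₂₂ = 16 / 9 := by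
      show (128 / 3 * (3 / η) ^ ((2 : ℝ) / 3) * c ^ ((5 : ℝ) / 3)) /
        (24 * (3 / η) ^ ((2 : ℝ) / 3) * c ^ ((5 : ℝ) / 3)) = 16 / 9
      rw [div_eq_iff hH22]
      ring
    rw [this, show (16 : ℝ) / 9 = (4 / 3) ^ 2 by norm_num, Real.sqrt_sq (by norm_num)]
end
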